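/- Let M ≥ 2 be an integer and let T^{tr}, ζ > 0 be real numbers. Then lim_{P→∞} ln( 1 + ((P/M)·(M−1)) / (1 + (T^{tr}/M)·P^ζ) ) / ln P = max(1 − ζ, 0); consequently lim_{P→∞} [ ln(1 + P/M) − ln( 1 + ((P/M)·(M−1)) / (1 + (T^{tr}/M)·P^ζ) ) ] / ln P = min(ζ, 1). (Lemma 3: for open-loop training with user training power P^ζ, the inter-beam interference penalty after training has high-SNR order max(1−ζ,0), so the rate after training has multiplexing order min(ζ,1), independent of the number of training symbols T^{tr}.) -/

import Mathlib

open Real Filter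

lemma log_div_log_tendsto (g : ℝ → ℝ) (γ c : ℝ) (hc : 0 < c)
    (hg : Tendsto (fun P => g P / P ^ γ) atTop (nhds c))
    (hpos : ∀ᶠ P in atTop, 0 < g P) :
    Tendsto (fun P => Real.log (g P) / Real.log P) atTop (nhds γ) := by
  have h0 : Tendsto (fun P => Real.log (g P / P ^ γ) / Real.log P) atTop (nhds 0) := by
    apply Tendsto.div_atTop (a := Real.log c)
    · exact (Real.continuousAt_log hc.ne').tendsto.comp hg
    · exact Real.tendsto_log_atTop
  have heq : ∀ᶠ P in atTop, Real.log (g P / P ^ γ) / Real.log P + γ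
      = Real.log (g P) / Real.log P := by
    filter_upwards [hpos, eventually_gt_atTop (1:ℝ)] with P hgP hP1
    have hP0 : (0:ℝ) < P := lt_trans one_pos hP1
    have hlogP : Real.log P ≠ 0 := ne_of_gt (Real.log_pos hP1)
    rw [Real.log_div hgP.ne' (Real.rpow_pos_of_pos hP0 γ).ne', Real.log_rpow hP0]
    field_simp
    ring
  have := (h0.add_const γ)
  rw [zero_add] at this
  exact Tendsto.congr' heq this

theorem highSNR_rate_after_training_open
    (M : ℕ) (hM : 2 ≤ M) (Ttr ζ : ℝ) (hTtr : 0 < Ttr) (hζ : 0 < ζ) :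
    Tendsto
      (fun P : ℝ =>
        Real.log (1 + (P / (M : ℝ) * ((M : ℝ) - 1)) / (1 + (Ttr / (M : ℝ)) * P ^ ζ)) /
          Real.log P)
      atTop (nhds (max (1 - ζ) 0)) ∧
    Tendsto
      (fun P : ℝ =>
        (Real.log (1 + P / (M : ℝ)) -
          Real.log (1 + (P / (M : ℝ) * ((M : ℝ) - 1)) / (1 + (Ttr / (M : ℝ)) * P ^ ζ))) /
          Real.log P)
      atTop (nhds (min ζ 1)) := by
  have hM0 : (0:ℝ) < (M:ℝ) := by positivity
  have hM1 : (1:ℝ) ≤ (M:ℝ) - 1 := by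
    have : (2:ℝ) ≤ (M:ℝ) := by exact_mod_cast hM
    linarith
  set b : ℝ := Ttr / M with hbdef
  have hb : 0 < b := div_pos hTtr hM0
  have ha : 0 < ((M:ℝ) - 1) / M := div_pos (by linarith) hM0
  -- g1 = 1 + b P^ζ
  have hg1pos : ∀ᶠ P in atTop, (0:ℝ) < 1 + b * P ^ ζ := by
    filter_upwards [eventually_gt_atTop (0:ℝ)] with P hP
    positivity
  have h1 : Tendsto (fun P => Real.log (1 + b * P ^ ζ) / Real.log P) atTop (nhds ζ) := by
    apply log_div_log_tendsto _ ζ b hb _ hg1pos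
    have : Tendsto (fun P : ℝ => P ^ (-ζ) + b) atTop (nhds (0 + b)) :=
      (tendsto_rpow_neg_atTop hζ).add_const b
    rw [zero_add] at this
    apply this.congr'
    filter_upwards [eventually_gt_atTop (0:ℝ)] with P hP
    have hPζ : (0:ℝ) < P ^ ζ := Real.rpow_pos_of_pos hP ζ
    rw [Real.rpow_neg hP.le]
    field_simp
  -- g2 = 1 + b P^ζ + a P
  set a : ℝ := ((M:ℝ) - 1) / M with hadef
  have hg2pos : ∀ᶠ P in atTop, (0:ℝ) < 1 + b * P ^ ζ + a * P := by
    filter_upwards [eventually_gt_atTop (0:ℝ)] with P hP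
    have : 0 < a * P := mul_pos ha hP
    have : 0 < b * P ^ ζ := mul_pos hb (Real.rpow_pos_of_pos hP ζ)
    positivity
  have key : ∀ γ c : ℝ, 0 < c →
      Tendsto (fun P : ℝ => P ^ (-γ) + b * P ^ (ζ - γ) + a * P ^ (1 - γ)) atTop (nhds c) →
      Tendsto (fun P => Real.log (1 + b * P ^ ζ + a * P) / Real.log P) atTop (nhds γ) := by
    intro γ c hc ht
    apply log_div_log_tendsto _ γ c hc _ hg2pos
    apply ht.congr'
    filter_upwards [eventually_gt_atTop (0:ℝ)] with P hP
    have hPγ : (0:ℝ) < P ^ γ := Real.rpow_pos_of_pos hP γ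
    rw [Real.rpow_neg hP.le, Real.rpow_sub hP, Real.rpow_sub hP, Real.rpow_one]
    field_simp
  have h2 : Tendsto (fun P => Real.log (1 + b * P ^ ζ + a * P) / Real.log P) atTop
      (nhds (max ζ 1)) := by
    rcases lt_trichotomy ζ 1 with hζ1 | hζ1 | hζ1
    · rw [max_eq_right hζ1.le]
      apply key 1 a ha
      have t1 : Tendsto (fun P : ℝ => P ^ (-(1:ℝ))) atTop (nhds 0) :=
        tendsto_rpow_neg_atTop one_pos
      have t2 : Tendsto (fun P : ℝ => b * P ^ (ζ - 1)) atTop (nhds (b * 0)) := by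
        apply Tendsto.const_mul
        have := tendsto_rpow_neg_atTop (y := 1 - ζ) (by linarith)
        simpa [neg_sub] using this
      have t3 : Tendsto (fun P : ℝ => a * P ^ (1 - (1:ℝ))) atTop (nhds a) := by
        simp [Real.rpow_zero]
      have := (t1.add t2).add t3
      simpa using this
    · subst hζ1
      rw [max_self]
      apply key 1 (b + a) (by positivity)
      have t1 : Tendsto (fun P : ℝ => P ^ (-(1:ℝ))) atTop (nhds 0) :=
        tendsto_rpow_neg_atTop one_pos
      have t2 : Tendsto (fun P : ℝ => b * P ^ ((1:ℝ) - 1) + a * P ^ ((1:ℝ) - 1)) atTop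
          (nhds (b + a)) := by simp [Real.rpow_zero]
      have := t1.add t2
      simpa [add_assoc] using this
    · rw [max_eq_left hζ1.le]
      apply key ζ b hb
      have t1 : Tendsto (fun P : ℝ => P ^ (-ζ)) atTop (nhds 0) := tendsto_rpow_neg_atTop hζ
      have t2 : Tendsto (fun P : ℝ => b * P ^ (ζ - ζ)) atTop (nhds b) := by
        simp [Real.rpow_zero]
      have t3 : Tendsto (fun P : ℝ => a * P ^ (1 - ζ)) atTop (nhds (a * 0)) := by
        apply Tendsto.const_mul
        have := tendsto_rpow_neg_atTop (y := ζ - 1) (by linarith)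
        simpa [neg_sub] using this
      have := (t1.add t2).add t3
      simpa using this
  -- h3 : log(1 + P/M)/log P → 1
  have h3 : Tendsto (fun P => Real.log (1 + P / M) / Real.log P) atTop (nhds 1) := by
    apply log_div_log_tendsto _ 1 (1/(M:ℝ)) (by positivity)
    · have t1 : Tendsto (fun P : ℝ => P ^ (-(1:ℝ))) atTop (nhds 0) :=
        tendsto_rpow_neg_atTop one_pos
      have := t1.add_const (1/(M:ℝ))
      rw [zero_add] at this
      apply this.congr'
      filter_upwards [eventually_gt_atTop (0:ℝ)] with P hP
      rw [Real.rpow_neg hP.le, Real.rpow_one]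
      field_simp
    · filter_upwards [eventually_gt_atTop (0:ℝ)] with P hP
      positivity
  -- rewrite the interference term
  have hfirst : Tendsto
      (fun P : ℝ =>
        Real.log (1 + (P / (M : ℝ) * ((M : ℝ) - 1)) / (1 + b * P ^ ζ)) / Real.log P)
      atTop (nhds (max (1 - ζ) 0)) := by
    have heq : ∀ᶠ P in atTop,
        Real.log (1 + b * P ^ ζ + a * P) / Real.log P -
          Real.log (1 + b * P ^ ζ) / Real.log P
        = Real.log (1 + (P / (M : ℝ) * ((M : ℝ) - 1)) / (1 + b * P ^ ζ)) / Real.log P := by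
      filter_upwards [hg1pos, hg2pos, eventually_gt_atTop (0:ℝ)] with P hp1 hp2 hP
      have hx : 1 + (P / (M : ℝ) * ((M : ℝ) - 1)) / (1 + b * P ^ ζ)
          = (1 + b * P ^ ζ + a * P) / (1 + b * P ^ ζ) := by
        rw [hadef]
        field_simp
      rw [hx, Real.log_div hp2.ne' hp1.ne', sub_div]
    have hlim : max ζ 1 - ζ = max (1 - ζ) 0 := by
      rcases le_total ζ 1 with h | h
      · rw [max_eq_right h, max_eq_left (by linarith)]
      · rw [max_eq_left h, max_eq_right (by linarith)]; ring
    have := h2.sub h1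
    rw [hlim] at this
    exact this.congr' heq
  refine ⟨hfirst, ?_⟩
  have heq2 : ∀ᶠ P in atTop,
      Real.log (1 + P / M) / Real.log P -
        Real.log (1 + (P / (M : ℝ) * ((M : ℝ) - 1)) / (1 + b * P ^ ζ)) / Real.log P
      = (Real.log (1 + P / (M : ℝ)) -
          Real.log (1 + (P / (M : ℝ) * ((M : ℝ) - 1)) / (1 + b * P ^ ζ))) / Real.log P := by
    filter_upwards with P
    rw [sub_div]
  have hlim2 : 1 - max (1 - ζ) 0 = min ζ 1 := by
    rcases le_total ζ 1 with h | h
    · rw [max_eq_left (by linarith), min_eq_left h]; ring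
    · rw [max_eq_right (by linarith), min_eq_right h]; ring
  have := h3.sub hfirst
  rw [hlim2] at this
  exact this.congr' heq2
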